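/- arXiv:1709.09699 — 3 statements merged into one kernel-verified Lean document; each statement's English description precedes it below -/
import Mathlib

section
/- Let A be a nonnegative real m×m matrix and u a nonnegative vector in ℝ^m. Let I⁺ be the set of indices i ∈ {1,…,m} such that uᵀ Aᵏ e_i > 0 for some integer k ≥ 0 (equivalently, Σ_{k=0}^{∞} uᵀ Aᵏ e_i > 0), and let A⁺ be the principal submatrix of A with rows and columns restricted to I⁺. Then lim_{n→∞} (uᵀ Aⁿ 𝟏)^{1/n} = ρ(A⁺), where 𝟏 is the all-ones vector (with the conventions that the n-th root of 0 is 0 and that the spectral radius of an empty matrix is 0). -/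
open Matrix Filter

attribute [local instance] Classical.propDecidable

/-- Spectral radius of a real square matrix: the maximum modulus of its complex
eigenvalues (i.e. of the roots of its characteristic polynomial over ℂ),
with the convention that the spectral radius of an empty matrix is `0`. -/
noncomputable def specRad {m : Type*} [Fintype m] [DecidableEq m] (A : Matrix m m ℝ) : ℝ :=
  sSup {r : ℝ | r = 0 ∨ ∃ z ∈ (A.map Complex.ofReal).charpoly.roots, ‖z‖ = r}

section Aux

open Polynomial Topology
open scoped ENNReal NNReal

attribute [local instance] Matrix.linftyOpNormedAddCommGroup Matrix.linftyOpNormedRing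
  Matrix.linftyOpNormedAlgebra

private lemma spec_iff_root {n : Type*} [Fintype n] [DecidableEq n] (M : Matrix n n ℂ) (z : ℂ) :
    z ∈ spectrum ℂ M ↔ M.charpoly.IsRoot z := by
  rw [spectrum.mem_iff, Matrix.isUnit_iff_isUnit_det, isUnit_iff_ne_zero, not_not,
    Polynomial.IsRoot.def, Matrix.charpoly, ← Polynomial.coe_evalRingHom, RingHom.map_det]
  have : (evalRingHom z).mapMatrix M.charmatrix = (algebraMap ℂ (Matrix n n ℂ)) z - M := by
    ext i j
    by_cases h : i = j <;>
      simp [h, charmatrix_apply, Matrix.map_apply, Matrix.diagonal_apply,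
        Matrix.algebraMap_matrix_apply]
  rw [this]

private lemma specRad_eq {n : Type*} [Fintype n] [DecidableEq n] (A : Matrix n n ℝ) :
    specRad A = (spectralRadius ℂ (A.map Complex.ofReal)).toReal ∧
      spectralRadius ℂ (A.map Complex.ofReal) ≠ ⊤ := by
  set M := A.map Complex.ofReal
  set S := {r : ℝ | r = 0 ∨ ∃ z ∈ M.charpoly.roots, ‖z‖ = r}
  have hSfin : S.Finite := by
    have : S ⊆ insert 0 ((fun z : ℂ => ‖z‖) '' (M.charpoly.roots.toFinset : Set ℂ)) := by
      rintro r (rfl | ⟨z, hz, rfl⟩)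
      · exact Set.mem_insert _ _
      · exact Set.mem_insert_of_mem _ ⟨z, by simpa using hz, rfl⟩
    exact Set.Finite.subset (Set.Finite.insert 0 (((M.charpoly.roots.toFinset : Finset ℂ) :
      Set ℂ).toFinite.image _)) this
  have hbdd : BddAbove S := hSfin.bddAbove
  have h0S : (0 : ℝ) ∈ S := Or.inl rfl
  have hne : M.charpoly ≠ 0 := (Matrix.charpoly_monic M).ne_zero
  have hb : spectralRadius ℂ M ≤ ENNReal.ofReal (sSup S) := by
    rw [spectralRadius]
    refine iSup₂_le fun z hz => ?_
    have hroot : z ∈ M.charpoly.roots := by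
      rw [Polynomial.mem_roots hne]
      exact (spec_iff_root M z).1 hz
    have habs : ‖z‖ ≤ sSup S := le_csSup hbdd (Or.inr ⟨z, hroot, rfl⟩)
    calc (‖z‖₊ : ℝ≥0∞) = ENNReal.ofReal ‖z‖ := by
          rw [← ENNReal.ofReal_coe_nnreal]; rfl
      _ ≤ _ := ENNReal.ofReal_le_ofReal habs
  have hnetop : spectralRadius ℂ M ≠ ⊤ := ne_top_of_le_ne_top ENNReal.ofReal_ne_top hb
  refine ⟨le_antisymm ?_ ?_, hnetop⟩
  · refine csSup_le ⟨0, h0S⟩ ?_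
    rintro r (rfl | ⟨z, hz, rfl⟩)
    · exact ENNReal.toReal_nonneg
    · have hzspec : z ∈ spectrum ℂ M := (spec_iff_root M z).2 ((Polynomial.mem_roots hne).1 hz)
      have : (‖z‖₊ : ℝ≥0∞) ≤ spectralRadius ℂ M :=
        le_iSup₂ (f := fun k (_ : k ∈ spectrum ℂ M) => (‖k‖₊ : ℝ≥0∞)) z hzspec
      have := ENNReal.toReal_mono hnetop this
      simpa using this
  · have h0 : (0:ℝ) ≤ sSup S := le_csSup hbdd h0S
    calc (spectralRadius ℂ M).toReal ≤ (ENNReal.ofReal (sSup S)).toReal :=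
          ENNReal.toReal_mono ENNReal.ofReal_ne_top hb
      _ = sSup S := ENNReal.toReal_ofReal h0

private lemma gelfand_real {n : Type*} [Fintype n] [DecidableEq n] (M : Matrix n n ℂ)
    (htop : spectralRadius ℂ M ≠ ⊤) :
    Tendsto (fun k : ℕ => ‖M ^ k‖ ^ (1/(k:ℝ))) atTop (𝓝 (spectralRadius ℂ M).toReal) := by
  haveI : CompleteSpace (Matrix n n ℂ) := FiniteDimensional.complete ℂ _
  have h := spectrum.pow_nnnorm_pow_one_div_tendsto_nhds_spectralRadius M
  have h2 := (ENNReal.tendsto_toReal htop).comp h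
  convert h2 using 2 with k
  simp only [Function.comp_apply]
  rw [← ENNReal.toReal_rpow]
  simp

private lemma squeeze_rpow {f g : ℕ → ℝ} {c₁ c₂ L : ℝ} (hc₁ : 0 < c₁) (hc₂ : 0 < c₂)
    (hf : ∀ k, 0 ≤ f k) (h₁ : ∀ k, c₁ * f k ≤ g k) (h₂ : ∀ k, g k ≤ c₂ * f k)
    (hL : Tendsto (fun k : ℕ => f k ^ (1/(k:ℝ))) atTop (𝓝 L)) :
    Tendsto (fun k : ℕ => g k ^ (1/(k:ℝ))) atTop (𝓝 L) := by
  have hinv : Tendsto (fun k : ℕ => 1/(k:ℝ)) atTop (𝓝 0) :=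
    tendsto_one_div_atTop_nhds_zero_nat
  have hc1lim : Tendsto (fun k : ℕ => c₁ ^ (1/(k:ℝ))) atTop (𝓝 1) := by
    have := Filter.Tendsto.rpow (tendsto_const_nhds (x := c₁)) hinv (Or.inl hc₁.ne')
    simpa using this
  have hc2lim : Tendsto (fun k : ℕ => c₂ ^ (1/(k:ℝ))) atTop (𝓝 1) := by
    have := Filter.Tendsto.rpow (tendsto_const_nhds (x := c₂)) hinv (Or.inl hc₂.ne')
    simpa using this
  have hlow : Tendsto (fun k : ℕ => c₁ ^ (1/(k:ℝ)) * f k ^ (1/(k:ℝ))) atTop (𝓝 L) := by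
    simpa using hc1lim.mul hL
  have hhigh : Tendsto (fun k : ℕ => c₂ ^ (1/(k:ℝ)) * f k ^ (1/(k:ℝ))) atTop (𝓝 L) := by
    simpa using hc2lim.mul hL
  refine tendsto_of_tendsto_of_tendsto_of_le_of_le' hlow hhigh ?_ ?_
  · filter_upwards [eventually_ge_atTop 1] with k hk
    rw [← Real.mul_rpow hc₁.le (hf k)]
    exact Real.rpow_le_rpow (mul_nonneg hc₁.le (hf k)) (h₁ k)
      (one_div_nonneg.mpr (Nat.cast_nonneg k))
  · filter_upwards [eventually_ge_atTop 1] with k hk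
    rw [← Real.mul_rpow hc₂.le (hf k)]
    have hg : 0 ≤ g k := le_trans (mul_nonneg hc₁.le (hf k)) (h₁ k)
    exact Real.rpow_le_rpow hg (h₂ k) (one_div_nonneg.mpr (Nat.cast_nonneg k))

private lemma pow_nonneg' {n : Type*} [Fintype n] [DecidableEq n] {B : Matrix n n ℝ}
    (hB : ∀ i j, 0 ≤ B i j) : ∀ (k : ℕ) i j, 0 ≤ (B ^ k) i j := by
  intro k
  induction k with
  | zero => intro i j; rw [pow_zero]; by_cases h : i = j <;> simp [Matrix.one_apply, h]
  | succ k ih =>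
    intro i j
    rw [pow_succ, Matrix.mul_apply]
    exact Finset.sum_nonneg fun l _ => mul_nonneg (ih i l) (hB l j)

private lemma vecMul_pow_nonneg {n : Type*} [Fintype n] [DecidableEq n] {B : Matrix n n ℝ}
    {v : n → ℝ} (hB : ∀ i j, 0 ≤ B i j) (hv : ∀ i, 0 ≤ v i) (k : ℕ) (j : n) :
    0 ≤ Matrix.vecMul v (B ^ k) j := by
  simp only [Matrix.vecMul, dotProduct]
  exact Finset.sum_nonneg fun i _ => mul_nonneg (hv i) (pow_nonneg' hB k i j)

private lemma core {n : Type*} [Fintype n] [DecidableEq n] [Nonempty n] (B : Matrix n n ℝ)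
    (v : n → ℝ) (hB : ∀ i j, 0 ≤ B i j) (hv : ∀ i, 0 ≤ v i)
    (hreach : ∀ j, ∃ k : ℕ, 0 < Matrix.vecMul v (B ^ k) j) :
    Tendsto (fun k : ℕ => (∑ j, Matrix.vecMul v (B ^ k) j) ^ (1/(k:ℝ))) atTop
      (𝓝 (specRad B)) := by
  classical
  set Mc := B.map Complex.ofReal with hMc
  set t : ℕ → ℝ := fun k => ∑ j, Matrix.vecMul v (B ^ k) j with ht
  set S : ℕ → ℝ := fun k => ∑ i, ∑ j, (B ^ k) i j with hS
  set g : ℕ → ℝ := fun k => ‖Mc ^ k‖ with hgdef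
  have hMk : ∀ k : ℕ, Mc ^ k = (B ^ k).map Complex.ofReal := by
    intro k
    have : Mc = Complex.ofRealHom.mapMatrix B := rfl
    rw [this, ← map_pow]
    rfl
  set F : ℕ → n → ℝ≥0 := fun k i => ∑ j, ‖(B ^ k) i j‖₊ with hF
  have hgF : ∀ k, g k = ((Finset.univ.sup (F k) : ℝ≥0) : ℝ) := by
    intro k
    rw [hgdef]
    simp only [hMk k, Matrix.linfty_opNorm_def, Matrix.map_apply, Complex.nnnorm_real]
    rfl
  have hFcoe : ∀ k i, ((F k i : ℝ≥0) : ℝ) = ∑ j, (B ^ k) i j := by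
    intro k i
    rw [hF]
    push_cast
    exact Finset.sum_congr rfl fun j _ => by
      rw [Real.norm_eq_abs, abs_of_nonneg (pow_nonneg' hB k i j)]
  have hrow : ∀ k i, (∑ j, (B ^ k) i j) ≤ g k := by
    intro k i
    rw [hgF k, ← hFcoe k i]
    exact_mod_cast Finset.le_sup (Finset.mem_univ i)
  have hSnonneg : ∀ k, 0 ≤ S k :=
    fun k => Finset.sum_nonneg fun i _ => Finset.sum_nonneg fun j _ => pow_nonneg' hB k i j
  have hgle : ∀ k, g k ≤ S k := by
    intro k
    obtain ⟨i0, -, hi0⟩ := Finset.exists_mem_eq_sup Finset.univ Finset.univ_nonempty (F k)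
    rw [hgF k, hi0, hFcoe k i0]
    exact Finset.single_le_sum (f := fun i => ∑ j, (B ^ k) i j)
      (fun i _ => Finset.sum_nonneg fun j _ => pow_nonneg' hB k i j) (Finset.mem_univ i0)
  have hrowS : ∀ k i, (∑ j, (B ^ k) i j) ≤ S k := fun k i =>
    Finset.single_le_sum (f := fun i => ∑ j, (B ^ k) i j)
      (fun i _ => Finset.sum_nonneg fun j _ => pow_nonneg' hB k i j) (Finset.mem_univ i)
  -- expansion of t
  have htexp : ∀ k, t k = ∑ i, v i * ∑ j, (B ^ k) i j := by
    intro k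
    rw [ht]
    simp only [Matrix.vecMul, dotProduct]
    rw [Finset.sum_comm]
    exact Finset.sum_congr rfl fun i _ => by rw [Finset.mul_sum]
  have htnonneg : ∀ k, 0 ≤ t k := fun k =>
    Finset.sum_nonneg fun j _ => vecMul_pow_nonneg hB hv k j
  -- upper bound
  have hc₂ : 0 < ∑ i, v i := by
    obtain ⟨j0⟩ := (inferInstance : Nonempty n)
    obtain ⟨k, hk⟩ := hreach j0
    by_contra h
    push_neg at h
    have hz : ∀ i, v i = 0 := by
      have := le_antisymm h (Finset.sum_nonneg fun i _ => hv i)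
      intro i
      exact le_antisymm (by
        have := (Finset.sum_eq_zero_iff_of_nonneg (fun i _ => hv i)).1 this i (Finset.mem_univ i)
        exact this.le) (hv i)
    have : Matrix.vecMul v (B ^ k) j0 = 0 := by
      simp only [Matrix.vecMul, dotProduct]
      exact Finset.sum_eq_zero fun i _ => by rw [hz i, zero_mul]
    rw [this] at hk
    exact lt_irrefl _ hk
  have hupper : ∀ k, t k ≤ (∑ i, v i) * g k := by
    intro k
    rw [htexp k, Finset.sum_mul]
    exact Finset.sum_le_sum fun i _ => mul_le_mul_of_nonneg_left (hrow k i) (hv i)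
  -- lower bound
  set K : ℕ := Finset.univ.sup fun j => Nat.find (hreach j) with hK
  set w : n → ℝ := fun j => ∑ l ∈ Finset.range (K + 1), Matrix.vecMul v (B ^ l) j with hw
  have hwpos : ∀ j, 0 < w j := by
    intro j
    refine Finset.sum_pos' (fun l _ => vecMul_pow_nonneg hB hv l j) ?_
    refine ⟨Nat.find (hreach j), ?_, Nat.find_spec (hreach j)⟩
    rw [Finset.mem_range, Nat.lt_succ_iff]
    exact Finset.le_sup (f := fun j => Nat.find (hreach j)) (Finset.mem_univ j)
  set c : ℝ := Finset.univ.inf' Finset.univ_nonempty w with hcdef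
  have hcpos : 0 < c := by
    rw [hcdef, Finset.lt_inf'_iff]
    exact fun j _ => hwpos j
  have hcle : ∀ j, c ≤ w j := fun j => Finset.inf'_le _ (Finset.mem_univ j)
  have hvecexp : ∀ (a b : ℕ) (j : n),
      Matrix.vecMul v (B ^ (a + b)) j = ∑ i, Matrix.vecMul v (B ^ a) i * (B ^ b) i j := by
    intro a b j
    rw [pow_add, ← Matrix.vecMul_vecMul]
    simp only [Matrix.vecMul, dotProduct]
  have hkey : ∀ k, c * S k ≤ ∑ l ∈ Finset.range (K + 1), t (l + k) := by
    intro k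
    have h1 : ∑ l ∈ Finset.range (K + 1), t (l + k) = ∑ i, w i * ∑ j, (B ^ k) i j := by
      simp only [ht]
      calc ∑ l ∈ Finset.range (K + 1), ∑ j, Matrix.vecMul v (B ^ (l + k)) j
          = ∑ l ∈ Finset.range (K + 1), ∑ j, ∑ i, Matrix.vecMul v (B ^ l) i * (B ^ k) i j := by
            exact Finset.sum_congr rfl fun l _ => Finset.sum_congr rfl fun j _ => hvecexp l k j
        _ = ∑ j, ∑ i, (∑ l ∈ Finset.range (K + 1), Matrix.vecMul v (B ^ l) i) * (B ^ k) i j := by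
            rw [Finset.sum_comm]
            refine Finset.sum_congr rfl fun j _ => ?_
            rw [Finset.sum_comm]
            refine Finset.sum_congr rfl fun i _ => ?_
            rw [Finset.sum_mul]
        _ = ∑ i, w i * ∑ j, (B ^ k) i j := by
            rw [Finset.sum_comm]
            refine Finset.sum_congr rfl fun i _ => ?_
            rw [Finset.mul_sum]
    rw [h1, hS, Finset.mul_sum]
    refine Finset.sum_le_sum fun i _ => ?_
    exact mul_le_mul_of_nonneg_right (hcle i)
      (Finset.sum_nonneg fun j _ => pow_nonneg' hB k i j)
  have hts : ∀ l k, t (l + k) ≤ t k * S l := by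
    intro l k
    have : t (l + k) = ∑ i, Matrix.vecMul v (B ^ k) i * ∑ j, (B ^ l) i j := by
      rw [ht]
      simp only [add_comm l k]
      calc ∑ j, Matrix.vecMul v (B ^ (k + l)) j
          = ∑ j, ∑ i, Matrix.vecMul v (B ^ k) i * (B ^ l) i j :=
            Finset.sum_congr rfl fun j _ => hvecexp k l j
        _ = ∑ i, Matrix.vecMul v (B ^ k) i * ∑ j, (B ^ l) i j := by
            rw [Finset.sum_comm]
            exact Finset.sum_congr rfl fun i _ => (Finset.mul_sum _ _ _).symm
    rw [this, ht]
    rw [Finset.sum_mul]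
    exact Finset.sum_le_sum fun i _ =>
      mul_le_mul_of_nonneg_left (hrowS l i) (vecMul_pow_nonneg hB hv k i)
  set D : ℝ := ∑ l ∈ Finset.range (K + 1), S l with hD
  have hDpos : 0 < D := by
    have hS0 : 0 < S 0 := by
      obtain ⟨i0⟩ := (inferInstance : Nonempty n)
      refine Finset.sum_pos' (fun i _ => Finset.sum_nonneg fun j _ => pow_nonneg' hB 0 i j)
        ⟨i0, Finset.mem_univ i0, Finset.sum_pos'
          (fun j _ => pow_nonneg' hB 0 i0 j) ⟨i0, Finset.mem_univ i0, by simp⟩⟩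
    refine Finset.sum_pos' (fun l _ => hSnonneg l) ⟨0, by simp, hS0⟩
  have hlower : ∀ k, (c / D) * g k ≤ t k := by
    intro k
    have h2 : c * S k ≤ t k * D := by
      calc c * S k ≤ ∑ l ∈ Finset.range (K + 1), t (l + k) := hkey k
        _ ≤ ∑ l ∈ Finset.range (K + 1), t k * S l :=
            Finset.sum_le_sum fun l _ => hts l k
        _ = t k * D := by rw [hD, Finset.mul_sum]
    have h3 : (c / D) * S k ≤ t k := by
      rw [div_mul_eq_mul_div, div_le_iff₀ hDpos]
      exact h2
    calc (c / D) * g k ≤ (c / D) * S k :=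
          mul_le_mul_of_nonneg_left (hgle k) (div_nonneg hcpos.le hDpos.le)
      _ ≤ t k := h3
  -- conclude
  obtain ⟨hρ, htop⟩ := specRad_eq B
  have hG := gelfand_real Mc htop
  rw [← hρ] at hG
  exact squeeze_rpow (div_pos hcpos hDpos) hc₂ (fun k => norm_nonneg _) hlower hupper hG

end Aux

/-- Weighted element sum of matrix powers: if `A` is nonnegative and `u` is a
nonnegative vector, then `(uᵀ Aⁿ 𝟏)^(1/n)` converges to the spectral radius of the
principal submatrix `A⁺` of `A` on the set `I⁺` of indices `i` with
`uᵀ Aᵏ e_i > 0` for some `k ≥ 0`. -/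
theorem weighted_element_sum_of_matrix_powers
    {m : Type*} [Fintype m] [DecidableEq m]
    (A : Matrix m m ℝ) (u : m → ℝ)
    (hA : ∀ i j, 0 ≤ A i j) (hu : ∀ i, 0 ≤ u i) :
    Tendsto (fun n : ℕ => (u ⬝ᵥ ((A ^ n) *ᵥ fun _ => (1 : ℝ))) ^ (1 / (n : ℝ)))
      atTop
      (nhds (specRad (A.submatrix
        (fun p : {i : m // ∃ k : ℕ, 0 < Matrix.vecMul u (A ^ k) i} => (p : m))
        (fun p : {i : m // ∃ k : ℕ, 0 < Matrix.vecMul u (A ^ k) i} => (p : m))))) := by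
  classical
  set P : m → Prop := fun i => ∃ k : ℕ, 0 < Matrix.vecMul u (A ^ k) i with hP
  set B : Matrix {i : m // P i} {i : m // P i} ℝ :=
    A.submatrix (fun p => (p : m)) (fun p => (p : m)) with hBdef
  set v : {i : m // P i} → ℝ := fun p => u p with hvdef
  have hB : ∀ i j, 0 ≤ B i j := fun i j => hA _ _
  have hv : ∀ i, 0 ≤ v i := fun i => hu _
  -- dot product as sum of vecMul
  have hdot : ∀ k : ℕ, (u ⬝ᵥ ((A ^ k) *ᵥ fun _ => (1 : ℝ))) = ∑ j, Matrix.vecMul u (A ^ k) j := by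
    intro k
    rw [Matrix.dotProduct_mulVec]
    simp [dotProduct]
  -- vanishing off P
  have hvanish : ∀ (k : ℕ) (i : m), ¬ P i → Matrix.vecMul u (A ^ k) i = 0 := by
    intro k i hi
    by_contra h
    exact hi ⟨k, lt_of_le_of_ne (vecMul_pow_nonneg hA hu k i) (Ne.symm h)⟩
  have hsum_restrict : ∀ (f : m → ℝ), (∀ i, ¬ P i → f i = 0) →
      (∑ p : {i : m // P i}, f p) = ∑ i, f i := by
    intro f hf
    rw [← Finset.sum_filter_of_ne (p := P) (fun i _ h => by
      by_contra hPi; exact h (hf i hPi))]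
    exact (Finset.sum_subtype (p := P) (Finset.univ.filter P)
      (fun x => by simp) f).symm
  -- commuting vecMul with restriction
  have hcomm : ∀ (k : ℕ) (p : {i : m // P i}),
      Matrix.vecMul v (B ^ k) p = Matrix.vecMul u (A ^ k) p.val := by
    intro k
    induction k with
    | zero => intro p; simp [Matrix.vecMul_one, hvdef]
    | succ k ih =>
      intro p
      have hA1 : Matrix.vecMul u (A ^ (k + 1)) p.val
          = ∑ i, Matrix.vecMul u (A ^ k) i * A i p.val := by
        rw [pow_succ, ← Matrix.vecMul_vecMul]
        simp only [Matrix.vecMul, dotProduct]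
      have hB1 : Matrix.vecMul v (B ^ (k + 1)) p
          = ∑ q : {i : m // P i}, Matrix.vecMul v (B ^ k) q * B q p := by
        rw [pow_succ, ← Matrix.vecMul_vecMul]
        simp only [Matrix.vecMul, dotProduct]
      rw [hA1, hB1]
      rw [← hsum_restrict (fun i => Matrix.vecMul u (A ^ k) i * A i p.val)
        (fun i hi => by simp [hvanish k i hi])]
      exact Finset.sum_congr rfl fun q _ => by rw [ih q]; rfl
  -- t equality
  have hteq : ∀ k : ℕ, (u ⬝ᵥ ((A ^ k) *ᵥ fun _ => (1 : ℝ)))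
      = ∑ p : {i : m // P i}, Matrix.vecMul v (B ^ k) p := by
    intro k
    rw [hdot k, ← hsum_restrict (fun i => Matrix.vecMul u (A ^ k) i) (hvanish k)]
    refine Finset.sum_congr rfl fun p _ => ?_
    exact (hcomm k p).symm
  by_cases hne : Nonempty {i : m // P i}
  · haveI := hne
    have hreach : ∀ p : {i : m // P i}, ∃ k : ℕ, 0 < Matrix.vecMul v (B ^ k) p := by
      intro p
      obtain ⟨k, hk⟩ := p.2
      exact ⟨k, by rw [hcomm k p]; exact hk⟩
    have := core B v hB hv hreach
    refine this.congr fun k => ?_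
    rw [hteq k]
  · -- empty case: u = 0 and specRad = 0
    have hu0 : ∀ i, u i = 0 := by
      intro i
      by_contra h
      have : 0 < u i := lt_of_le_of_ne (hu i) (Ne.symm h)
      exact hne ⟨⟨i, ⟨0, by simpa [Matrix.vecMul_one] using this⟩⟩⟩
    have hz : ∀ k : ℕ, (u ⬝ᵥ ((A ^ k) *ᵥ fun _ => (1 : ℝ))) = 0 := by
      intro k
      have : u = 0 := funext hu0
      rw [this, zero_dotProduct]
    have hspec0 : specRad B = 0 := by
      haveI : IsEmpty {i : m // P i} := not_nonempty_iff.1 hne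
      have hchar : (B.map Complex.ofReal).charpoly = 1 := by
        rw [Matrix.charpoly, Matrix.det_isEmpty]
      rw [specRad, hchar]
      have : {r : ℝ | r = 0 ∨ ∃ z ∈ (1 : Polynomial ℂ).roots, ‖z‖ = r} = {0} := by
        ext r
        simp [Polynomial.roots_one]
      rw [this, csSup_singleton]
    rw [hspec0]
    have : ∀ᶠ k : ℕ in atTop, (0:ℝ) = (u ⬝ᵥ ((A ^ k) *ᵥ fun _ => (1 : ℝ))) ^ (1 / (k:ℝ)) := by
      filter_upwards [eventually_ge_atTop 1] with k hk
      rw [hz k, Real.zero_rpow]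
      positivity
    exact tendsto_const_nhds.congr' this
end

section
/- Let an HMM over finite sets 𝒳, 𝒵 be given by transition matrix P, emission matrix E and initial distribution π, and let α ≥ 2 be an integer. Then for every n ≥ 1, the collision sum of the observed word distribution satisfies Σ_{z ∈ 𝒵ⁿ} p(z)^α = vᵀ · (M^{⊗α}_𝒞)^{n−1} · 𝟏, and consequently the Rényi entropy of the length-n observed word is H_α(Z₁ⁿ) = (1/(1−α)) · log₂( vᵀ · (M^{⊗α}_𝒞)^{n−1} · 𝟏 ). -/
open Matrix Finset

/-- The collision set `𝒞 ⊆ (𝒳×𝒵)^α`: tuples whose `𝒵`-components all agree. -/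
abbrev Coll (X Z : Type*) (α : ℕ) : Type _ :=
  {t : Fin α → X × Z // ∀ j j', (t j).2 = (t j').2}

/-- The joint-chain matrix `M((x,z),(x',z')) = P(x,x') · E(x',z')`. -/
def jointM {X Z : Type*} (P : Matrix X X ℝ) (E : Matrix X Z ℝ) :
    Matrix (X × Z) (X × Z) ℝ :=
  fun p q => P p.1 q.1 * E q.1 q.2

/-- The α-fold Kronecker tensor power of the joint-chain matrix, restricted to the
collision set `𝒞` (rows and columns in `𝒞`). -/
def tensRestr {X Z : Type*} (P : Matrix X X ℝ) (E : Matrix X Z ℝ) (α : ℕ) :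
    Matrix (Coll X Z α) (Coll X Z α) ℝ :=
  fun s s' => ∏ j, jointM P E (s.1 j) (s'.1 j)

/-- The initial vector `v` on `𝒞`: `v((x⁽¹⁾,z⁽¹⁾),…) = ∏ⱼ π(x⁽ʲ⁾)·E(x⁽ʲ⁾,z⁽ʲ⁾)`. -/
def vinit {X Z : Type*} (E : Matrix X Z ℝ) (π : X → ℝ) (α : ℕ) : Coll X Z α → ℝ :=
  fun t => ∏ j, π (t.1 j).1 * E (t.1 j).1 (t.1 j).2

/-- The probability of the observed word `z = (z₁,…,z_{n+1})` under the HMM. -/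
def hmmWordProb {X Z : Type*} [Fintype X]
    (P : Matrix X X ℝ) (E : Matrix X Z ℝ) (π : X → ℝ) (n : ℕ)
    (z : Fin (n + 1) → Z) : ℝ :=
  ∑ x : Fin (n + 1) → X,
    (π (x 0) * E (x 0) (z 0)) *
      ∏ i : Fin n, P (x i.castSucc) (x i.succ) * E (x i.succ) (z i.succ)

/-- Path-sum expansion of `w ⬝ᵥ (Aⁿ *ᵥ 1)`. -/
lemma pathSum {S : Type*} [Fintype S] [DecidableEq S] (A : Matrix S S ℝ) (n : ℕ) :
    ∀ w : S → ℝ, w ⬝ᵥ ((A ^ n) *ᵥ fun _ => (1 : ℝ)) =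
      ∑ s : Fin (n + 1) → S, w (s 0) * ∏ i : Fin n, A (s i.castSucc) (s i.succ) := by
  induction n with
  | zero =>
    intro w
    rw [pow_zero, Matrix.one_mulVec,
      ← Equiv.sum_comp (Equiv.funUnique (Fin 1) S).symm
        (fun s : Fin 1 → S => w (s 0) * ∏ i : Fin 0, A (s i.castSucc) (s i.succ))]
    simp [dotProduct]
  | succ n ih =>
    intro w
    rw [pow_succ', ← Matrix.mulVec_mulVec, Matrix.dotProduct_mulVec, ih (w ᵥ* A),
      ← Equiv.sum_comp (Fin.consEquiv (fun _ : Fin (n + 2) => S))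
        (fun s : Fin (n + 2) → S => w (s 0) * ∏ i : Fin (n + 1), A (s i.castSucc) (s i.succ)),
      Fintype.sum_prod_type]
    rw [Finset.sum_comm]
    refine Finset.sum_congr rfl fun s _ => ?_
    simp only [Matrix.vecMul, dotProduct, Finset.sum_mul, Fin.consEquiv_apply]
    refine Finset.sum_congr rfl fun t _ => ?_
    rw [Fin.prod_univ_succ]
    simp only [Fin.consEquiv_apply, Fin.cons_zero, Fin.cons_succ, Fin.castSucc_zero,
      ← Fin.succ_castSucc]
    ring
  
/-- The collision set is in bijection with `(Fin α → X) × Z`, pathwise. -/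
def collPathEquiv (X Z : Type*) (α m : ℕ) (hα : 0 < α) :
    ((Fin α → (Fin m → X)) × (Fin m → Z)) ≃ (Fin m → Coll X Z α) where
  toFun p := fun i => ⟨fun j => (p.1 j i, p.2 i), fun _ _ => rfl⟩
  invFun s := (fun j i => ((s i).1 j).1, fun i => ((s i).1 ⟨0, hα⟩).2)
  left_inv p := rfl
  right_inv s := by
    funext i
    apply Subtype.ext
    funext j
    exact Prod.ext rfl ((s i).2 ⟨0, hα⟩ j)

/-- Rényi entropy (of integer order `α ≥ 2`) of finite-length realizations of an HMM:
for every word length `n+1 ≥ 1`, the collision sum of the observed word distribution is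
`vᵀ · (M^{⊗α}_𝒞)ⁿ · 𝟏` and consequently
`H_α(Z₁^{n+1}) = (1/(1−α)) · log₂ (vᵀ · (M^{⊗α}_𝒞)ⁿ · 𝟏)`. -/
theorem hmm_renyi_finite_length
    {X Z : Type*} [Fintype X] [Fintype Z] [DecidableEq X] [DecidableEq Z]
    (P : Matrix X X ℝ) (E : Matrix X Z ℝ) (π : X → ℝ)
    (hP0 : ∀ x x', 0 ≤ P x x') (hP1 : ∀ x, ∑ x', P x x' = 1)
    (hE0 : ∀ x z, 0 ≤ E x z) (hE1 : ∀ x, ∑ z, E x z = 1)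
    (hπ0 : ∀ x, 0 ≤ π x) (hπ1 : ∑ x, π x = 1)
    (α : ℕ) (hα : 2 ≤ α) (n : ℕ) :
    (∑ z : Fin (n + 1) → Z, hmmWordProb P E π n z ^ α
        = vinit E π α ⬝ᵥ ((tensRestr P E α ^ n) *ᵥ fun _ => (1 : ℝ))) ∧
    (1 / (1 - (α : ℝ))) * Real.logb 2 (∑ z : Fin (n + 1) → Z, hmmWordProb P E π n z ^ α)
        = (1 / (1 - (α : ℝ))) *
            Real.logb 2 (vinit E π α ⬝ᵥ ((tensRestr P E α ^ n) *ᵥ fun _ => (1 : ℝ))) := by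
  have hα0 : 0 < α := by omega
  have key : ∑ z : Fin (n + 1) → Z, hmmWordProb P E π n z ^ α
      = vinit E π α ⬝ᵥ ((tensRestr P E α ^ n) *ᵥ fun _ => (1 : ℝ)) := by
    rw [pathSum,
      ← Equiv.sum_comp (collPathEquiv X Z α (n + 1) hα0)
        (fun s : Fin (n + 1) → Coll X Z α =>
          vinit E π α (s 0) * ∏ i : Fin n, tensRestr P E α (s i.castSucc) (s i.succ)),
      Fintype.sum_prod_type, Finset.sum_comm]
    refine Finset.sum_congr rfl fun z _ => ?_
    have hpow : hmmWordProb P E π n z ^ α = ∏ _j : Fin α, hmmWordProb P E π n z := by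
      rw [Finset.prod_const, Finset.card_univ, Fintype.card_fin]
    rw [hpow]
    unfold hmmWordProb
    rw [Finset.prod_univ_sum, Fintype.piFinset_univ]
    refine Finset.sum_congr rfl fun g _ => ?_
    simp only [collPathEquiv, Equiv.coe_fn_mk, vinit, tensRestr, jointM]
    rw [Finset.prod_mul_distrib, ← Finset.prod_comm]
  refine ⟨key, by rw [key]⟩
end

section
/- Let A be a nonnegative irreducible m×m real matrix (its associated graph is strongly connected) with A ≠ 0, and let u be a nonnegative nonzero vector in ℝ^m. Then lim_{n→∞} (uᵀ Aⁿ 𝟏)^{1/n} = ρ(A), where 𝟏 is the all-ones vector and ρ(A) is the spectral radius of A. -/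
open Matrix Filter

open Polynomial Topology
open scoped NNReal ENNReal

attribute [local instance] Matrix.linftyOpNormedRing Matrix.linftyOpNormedAlgebra

section Aux

variable {m : Type*} [Fintype m] [DecidableEq m]

lemma specRadAux_spectrum_eq (M : Matrix m m ℂ) :
    spectrum ℂ M = {z | M.charpoly.eval z = 0} := by
  ext z
  rw [spectrum.mem_iff, Matrix.isUnit_iff_isUnit_det, isUnit_iff_ne_zero, Set.mem_setOf_eq,
    not_ne_iff]
  constructor
  · intro h
    rw [Matrix.charpoly, ← Polynomial.coe_evalRingHom, RingHom.map_det, ← h]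
    congr 1
    ext i j
    by_cases hij : i = j
    · subst hij; simp [Matrix.charmatrix_apply_eq, Matrix.algebraMap_matrix_apply]
    · simp [Matrix.charmatrix_apply_ne _ _ _ hij, Matrix.algebraMap_matrix_apply, hij]
  · intro h
    rw [Matrix.charpoly, ← Polynomial.coe_evalRingHom, RingHom.map_det] at h
    rw [← h]
    congr 1
    ext i j
    by_cases hij : i = j
    · subst hij; simp [Matrix.charmatrix_apply_eq, Matrix.algebraMap_matrix_apply]
    · simp [Matrix.charmatrix_apply_ne _ _ _ hij, Matrix.algebraMap_matrix_apply, hij]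

lemma specRadAux_eq_toReal [Nonempty m] (A : Matrix m m ℝ) :
    specRad A = (spectralRadius ℂ (A.map Complex.ofReal)).toReal := by
  unfold specRad
  set M := A.map Complex.ofReal with hM
  set S := {r : ℝ | r = 0 ∨ ∃ z ∈ M.charpoly.roots, ‖z‖ = r} with hS
  have hchar0 : M.charpoly ≠ 0 := (Matrix.charpoly_monic M).ne_zero
  have hmem : ∀ z : ℂ, z ∈ spectrum ℂ M ↔ z ∈ M.charpoly.roots := by
    intro z
    rw [specRadAux_spectrum_eq M, Set.mem_setOf_eq, Polynomial.mem_roots hchar0,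
      Polynomial.IsRoot]
  have hSfin : S.Finite := by
    have : S ⊆ insert 0 ((fun z : ℂ => ‖z‖) '' ((M.charpoly.roots.toFinset : Finset ℂ) : Set ℂ)) := by
      rintro r (rfl | ⟨z, hz, rfl⟩)
      · exact Set.mem_insert _ _
      · exact Set.mem_insert_of_mem _ ⟨z, by simpa using hz, rfl⟩
    exact Set.Finite.subset
      (Set.Finite.insert 0 ((M.charpoly.roots.toFinset.finite_toSet).image _)) this
  have hbdd : BddAbove S := hSfin.bddAbove
  have hρtop : spectralRadius ℂ M ≠ ⊤ :=
    ((spectrum.spectralRadius_le_nnnorm M).trans_lt ENNReal.coe_lt_top).ne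
  have h0S : (0:ℝ) ≤ sSup S := le_csSup hbdd (Or.inl rfl)
  apply le_antisymm
  · apply Real.sSup_le _ ENNReal.toReal_nonneg
    rintro r (rfl | ⟨z, hz, rfl⟩)
    · exact ENNReal.toReal_nonneg
    · have hzs : z ∈ spectrum ℂ M := (hmem z).2 hz
      have h1 : (‖z‖₊ : ℝ≥0∞) ≤ spectralRadius ℂ M :=
        le_iSup₂ (f := fun (z : ℂ) (_ : z ∈ spectrum ℂ M) => (‖z‖₊ : ℝ≥0∞)) z hzs
      have := ENNReal.toReal_mono hρtop h1
      simpa using this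
  · have h2 : spectralRadius ℂ M ≤ ENNReal.ofReal (sSup S) := by
      apply iSup₂_le
      intro z hz
      have : ‖z‖ ≤ sSup S := le_csSup hbdd (Or.inr ⟨z, (hmem z).1 hz, rfl⟩)
      rw [← ENNReal.ofReal_coe_nnreal]
      apply ENNReal.ofReal_le_ofReal
      simpa using this
    have := ENNReal.toReal_mono ENNReal.ofReal_ne_top h2
    rwa [ENNReal.toReal_ofReal h0S] at this

lemma specRadAux_gelfand [Nonempty m] (M : Matrix m m ℂ) :
    Tendsto (fun n : ℕ => ‖M ^ n‖ ^ (1 / (n:ℝ))) atTop (𝓝 (spectralRadius ℂ M).toReal) := by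
  have : CompleteSpace (Matrix m m ℂ) := FiniteDimensional.complete ℂ _
  have hρtop : spectralRadius ℂ M ≠ ⊤ :=
    ((spectrum.spectralRadius_le_nnnorm M).trans_lt ENNReal.coe_lt_top).ne
  have h := spectrum.pow_nnnorm_pow_one_div_tendsto_nhds_spectralRadius M
  have h2 := (ENNReal.tendsto_toReal hρtop).comp h
  convert h2 using 2 with n
  rw [Function.comp_apply, ← ENNReal.toReal_rpow, ENNReal.coe_toReal, coe_nnnorm]

lemma specRadAux_rowsum_eq {B : Matrix m m ℝ} (hB : ∀ i j, 0 ≤ B i j) (i : m) :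
    ((∑ j, ‖(B.map Complex.ofReal) i j‖₊ : ℝ≥0) : ℝ) = ∑ j, B i j := by
  push_cast
  refine Finset.sum_congr rfl fun j _ => ?_
  rw [Matrix.map_apply, Complex.norm_real, Real.norm_of_nonneg (hB i j)]

lemma specRadAux_rowsum_le_norm {B : Matrix m m ℝ} (hB : ∀ i j, 0 ≤ B i j) (i : m) :
    ∑ j, B i j ≤ ‖B.map Complex.ofReal‖ := by
  rw [Matrix.linfty_opNorm_def, ← specRadAux_rowsum_eq hB i]
  exact_mod_cast NNReal.coe_le_coe.mpr (Finset.le_sup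
    (f := fun i => ∑ j, ‖(B.map Complex.ofReal) i j‖₊) (Finset.mem_univ i))

lemma specRadAux_norm_eq_rowsum [Nonempty m] {B : Matrix m m ℝ} (hB : ∀ i j, 0 ≤ B i j) :
    ∃ i, ‖B.map Complex.ofReal‖ = ∑ j, B i j := by
  obtain ⟨i, -, hi⟩ := Finset.exists_mem_eq_sup (Finset.univ : Finset m) Finset.univ_nonempty
    (fun i => ∑ j, ‖(B.map Complex.ofReal) i j‖₊)
  exact ⟨i, by rw [Matrix.linfty_opNorm_def, hi, specRadAux_rowsum_eq hB i]⟩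

lemma specRadAux_map_pow (A : Matrix m m ℝ) (n : ℕ) :
    (A.map Complex.ofReal) ^ n = (A ^ n).map Complex.ofReal := by
  have : (A.map Complex.ofReal) = Complex.ofRealHom.mapMatrix A := rfl
  rw [this, ← map_pow]; rfl

lemma specRadAux_pow_entry_nonneg {A : Matrix m m ℝ} (hA : ∀ i j, 0 ≤ A i j) (n : ℕ) :
    ∀ i j, 0 ≤ (A ^ n) i j := by
  induction n with
  | zero => intro i j; by_cases h : i = j <;> simp [h, Matrix.one_apply]
  | succ n ih =>
    intro i j
    rw [pow_succ, Matrix.mul_apply]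
    exact Finset.sum_nonneg fun k _ => mul_nonneg (ih i k) (hA k j)

lemma specRadAux_exists_pow_pos {A : Matrix m m ℝ} (hA : ∀ i j, 0 ≤ A i j) {i j : m}
    (h : Relation.ReflTransGen (fun a b => 0 < A a b) i j) :
    ∃ p, 0 < (A ^ p) i j := by
  induction h with
  | refl => exact ⟨0, by simp [Matrix.one_apply]⟩
  | @tail b c hb hbc ih =>
    obtain ⟨p, hp⟩ := ih
    refine ⟨p + 1, ?_⟩
    rw [pow_succ, Matrix.mul_apply]
    refine Finset.sum_pos' (fun k _ => mul_nonneg (specRadAux_pow_entry_nonneg hA p i k) (hA k c))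
      ⟨b, Finset.mem_univ b, mul_pos hp hbc⟩

end Aux

/-- For a nonnegative irreducible matrix `A ≠ 0` (its associated graph, with an edge
`i → j` iff `A i j > 0`, is strongly connected) and a nonnegative nonzero vector `u`,
`(uᵀ Aⁿ 𝟏)^(1/n) → ρ(A)` as `n → ∞`. -/
theorem irreducible_weighted_element_sum_of_matrix_powers
    {m : Type*} [Fintype m] [DecidableEq m]
    (A : Matrix m m ℝ) (u : m → ℝ)
    (hA : ∀ i j, 0 ≤ A i j) (hA0 : A ≠ 0)
    (hirr : ∀ i j : m, Relation.ReflTransGen (fun a b => 0 < A a b) i j)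
    (hu : ∀ i, 0 ≤ u i) (hu0 : u ≠ 0) :
    Tendsto (fun n : ℕ => (u ⬝ᵥ ((A ^ n) *ᵥ fun _ => (1 : ℝ))) ^ (1 / (n : ℝ)))
      atTop (nhds (specRad A)) := by
  have hm : Nonempty m := by
    by_contra h
    rw [not_nonempty_iff] at h
    exact hA0 (by ext i j; exact h.elim i)
  set M := A.map Complex.ofReal with hMdef
  set g : ℕ → m → ℝ := fun n i => ∑ j, (A ^ n) i j with hg
  set T : ℕ → ℝ := fun n => ∑ i, g n i with hT
  set s : ℕ → ℝ := fun n => u ⬝ᵥ ((A ^ n) *ᵥ fun _ => (1:ℝ)) with hs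
  set t : ℕ → ℝ := fun n => ‖M ^ n‖ with ht
  have hgs : ∀ n, s n = ∑ i, u i * g n i := by
    intro n; simp [hs, dotProduct, mulVec, hg]
  have hgnn : ∀ n i, 0 ≤ g n i :=
    fun n i => Finset.sum_nonneg fun j _ => specRadAux_pow_entry_nonneg hA n i j
  have hTnn : ∀ n, 0 ≤ T n := fun n => Finset.sum_nonneg fun i _ => hgnn n i
  have hsnn : ∀ n, 0 ≤ s n := fun n =>
    (hgs n) ▸ Finset.sum_nonneg fun i _ => mul_nonneg (hu i) (hgnn n i)
  have htnn : ∀ n, 0 ≤ t n := fun n => norm_nonneg _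
  have htn : ∀ n, t n = ‖(A ^ n).map Complex.ofReal‖ := by
    intro n; rw [ht]; simp only [hMdef, specRadAux_map_pow]
  have hgt : ∀ n i, g n i ≤ t n := by
    intro n i
    rw [htn n]
    exact specRadAux_rowsum_le_norm (specRadAux_pow_entry_nonneg hA n) i
  have htT : ∀ n, t n ≤ T n := by
    intro n
    obtain ⟨i, hi⟩ := specRadAux_norm_eq_rowsum (specRadAux_pow_entry_nonneg hA n)
    rw [htn n, hi]
    exact Finset.single_le_sum (fun i _ => hgnn n i) (Finset.mem_univ i)
  -- upper bound
  set C : ℝ := ∑ i, u i with hC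
  obtain ⟨i0, hi0⟩ : ∃ i, 0 < u i := by
    by_contra h; push_neg at h
    exact hu0 (funext fun i => le_antisymm (h i) (hu i))
  have hCpos : 0 < C :=
    lt_of_lt_of_le hi0 (Finset.single_le_sum (fun i _ => hu i) (Finset.mem_univ i0))
  have hupper : ∀ n, s n ≤ C * t n := by
    intro n
    rw [hgs n, hC, Finset.sum_mul]
    exact Finset.sum_le_sum fun i _ => mul_le_mul (le_refl (u i)) (hgt n i) (hgnn n i) (hu i)
  -- lower bound
  choose p hp using fun i => specRadAux_exists_pow_pos hA (hirr i0 i)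
  set N : ℕ := Finset.univ.sup p with hN
  set δ : ℝ := Finset.univ.inf' Finset.univ_nonempty (fun i => (A ^ p i) i0 i) with hδ
  have hδpos : 0 < δ := by
    rw [hδ, Finset.lt_inf'_iff]
    exact fun i _ => hp i
  have hδle : ∀ k, δ ≤ ∑ q ∈ Finset.range (N+1), (A ^ q) i0 k := by
    intro k
    calc δ ≤ (A ^ p k) i0 k := Finset.inf'_le _ (Finset.mem_univ k)
      _ ≤ ∑ q ∈ Finset.range (N+1), (A ^ q) i0 k :=
        Finset.single_le_sum (fun q _ => specRadAux_pow_entry_nonneg hA q i0 k)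
          (Finset.mem_range.mpr (Nat.lt_succ_of_le (Finset.le_sup (Finset.mem_univ k))))
  have hgadd : ∀ q n, g (q + n) i0 = ∑ k, (A ^ q) i0 k * g n k := by
    intro q n
    simp only [hg, pow_add, Matrix.mul_apply]
    rw [Finset.sum_comm]
    exact Finset.sum_congr rfl fun k _ => (Finset.mul_sum _ _ _).symm
  have hkey : ∀ n, u i0 * (δ * T n) ≤ ∑ q ∈ Finset.range (N+1), s (n + q) := by
    intro n
    have h1 : ∀ n', u i0 * g n' i0 ≤ s n' := fun n' => by
      rw [hgs n']
      exact Finset.single_le_sum (fun i _ => mul_nonneg (hu i) (hgnn n' i)) (Finset.mem_univ i0)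
    calc u i0 * (δ * T n) ≤ u i0 * (∑ q ∈ Finset.range (N+1), g (n + q) i0) := by
          apply mul_le_mul_of_nonneg_left _ hi0.le
          calc δ * T n = ∑ k, δ * g n k := by rw [hT, Finset.mul_sum]
            _ ≤ ∑ k, (∑ q ∈ Finset.range (N+1), (A ^ q) i0 k) * g n k :=
                Finset.sum_le_sum fun k _ => mul_le_mul_of_nonneg_right (hδle k) (hgnn n k)
            _ = ∑ q ∈ Finset.range (N+1), g (n + q) i0 := by
                simp_rw [Finset.sum_mul]
                rw [Finset.sum_comm]
                exact Finset.sum_congr rfl fun q _ => by rw [Nat.add_comm n q, hgadd q n]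
      _ ≤ ∑ q ∈ Finset.range (N+1), s (n + q) := by
          rw [Finset.mul_sum]; exact Finset.sum_le_sum fun q _ => h1 _
  -- step bound
  set K : ℝ := 1 + ∑ i, ∑ j, A i j with hK
  have hK1 : 1 ≤ K :=
    le_add_of_nonneg_right (Finset.sum_nonneg fun i _ => Finset.sum_nonneg fun j _ => hA i j)
  have hrowK : ∀ k, ∑ j, A k j ≤ K := by
    intro k
    rw [hK]
    have := Finset.single_le_sum (f := fun i => ∑ j, A i j)
      (fun i _ => Finset.sum_nonneg fun j _ => hA i j) (Finset.mem_univ k)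
    linarith
  have hstep : ∀ n, s (n+1) ≤ K * s n := by
    intro n
    have hgstep : ∀ i, g (n+1) i ≤ K * g n i := by
      intro i
      have he : g (n+1) i = ∑ k, (A ^ n) i k * (∑ j, A k j) := by
        simp only [hg, pow_succ, Matrix.mul_apply]
        rw [Finset.sum_comm]
        exact Finset.sum_congr rfl fun k _ => (Finset.mul_sum _ _ _).symm
      rw [he]
      calc ∑ k, (A ^ n) i k * (∑ j, A k j) ≤ ∑ k, (A ^ n) i k * K :=
            Finset.sum_le_sum fun k _ =>
              mul_le_mul_of_nonneg_left (hrowK k) (specRadAux_pow_entry_nonneg hA n i k)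
        _ = K * g n i := by
            rw [hg, Finset.mul_sum]
            exact Finset.sum_congr rfl fun k _ => mul_comm _ _
    calc s (n+1) = ∑ i, u i * g (n+1) i := hgs (n+1)
      _ ≤ ∑ i, u i * (K * g n i) :=
          Finset.sum_le_sum fun i _ => mul_le_mul_of_nonneg_left (hgstep i) (hu i)
      _ = K * s n := by
          rw [hgs n, Finset.mul_sum]
          exact Finset.sum_congr rfl fun i _ => by ring
  have hpow : ∀ n q, s (n + q) ≤ K ^ q * s n := by
    intro n q
    induction q with
    | zero => simp
    | succ q ih =>
      calc s (n + (q+1)) = s ((n + q) + 1) := by ring_nf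
        _ ≤ K * s (n + q) := hstep _
        _ ≤ K * (K ^ q * s n) :=
            mul_le_mul_of_nonneg_left ih (le_trans zero_le_one hK1)
        _ = K ^ (q+1) * s n := by ring
  set D : ℝ := (N+1 : ℝ) * K ^ N with hD
  have hDpos : 0 < D :=
    mul_pos (by positivity) (pow_pos (lt_of_lt_of_le zero_lt_one hK1) N)
  set c : ℝ := (u i0 * δ) / D with hc
  have hcpos : 0 < c := div_pos (mul_pos hi0 hδpos) hDpos
  have hlower : ∀ n, c * t n ≤ s n := by
    intro n
    have h2 : ∑ q ∈ Finset.range (N+1), s (n + q) ≤ D * s n := by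
      calc ∑ q ∈ Finset.range (N+1), s (n + q)
          ≤ ∑ q ∈ Finset.range (N+1), K ^ N * s n := by
            refine Finset.sum_le_sum fun q hq => le_trans (hpow n q) ?_
            exact mul_le_mul_of_nonneg_right
              (pow_le_pow_right₀ hK1 (Nat.lt_succ_iff.mp (Finset.mem_range.mp hq))) (hsnn n)
        _ = D * s n := by
            rw [Finset.sum_const, Finset.card_range, nsmul_eq_mul, hD]
            push_cast; ring
    have h3 : u i0 * (δ * t n) ≤ D * s n := by
      refine le_trans (le_trans ?_ (hkey n)) h2
      exact mul_le_mul_of_nonneg_left (mul_le_mul_of_nonneg_left (htT n) hδpos.le) hi0.le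
    rw [hc, div_mul_eq_mul_div, div_le_iff₀ hDpos] at *
    nlinarith [htnn n]
  -- limits
  have hgel : Tendsto (fun n : ℕ => t n ^ (1 / (n:ℝ))) atTop (𝓝 (specRad A)) := by
    rw [specRadAux_eq_toReal A]
    exact specRadAux_gelfand M
  have haux : ∀ a : ℝ, 0 < a → Tendsto (fun n : ℕ => a ^ (1/(n:ℝ))) atTop (𝓝 1) := by
    intro a ha
    have h0 := (Real.continuousAt_const_rpow (a := a) (ne_of_gt ha)).tendsto.comp
      tendsto_one_div_atTop_nhds_zero_nat
    simpa [Real.rpow_zero, Function.comp_def] using h0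
  have hlowlim : Tendsto (fun n : ℕ => c ^ (1/(n:ℝ)) * t n ^ (1/(n:ℝ))) atTop (𝓝 (specRad A)) := by
    simpa using (haux c hcpos).mul hgel
  have hhighlim : Tendsto (fun n : ℕ => C ^ (1/(n:ℝ)) * t n ^ (1/(n:ℝ))) atTop
      (𝓝 (specRad A)) := by
    simpa using (haux C hCpos).mul hgel
  refine tendsto_of_tendsto_of_tendsto_of_le_of_le hlowlim hhighlim ?_ ?_
  · intro n
    show c ^ (1/(n:ℝ)) * t n ^ (1/(n:ℝ)) ≤ s n ^ (1/(n:ℝ))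
    rw [← Real.mul_rpow hcpos.le (htnn n)]
    exact Real.rpow_le_rpow (by positivity) (hlower n) (by positivity)
  · intro n
    show s n ^ (1/(n:ℝ)) ≤ C ^ (1/(n:ℝ)) * t n ^ (1/(n:ℝ))
    rw [← Real.mul_rpow hCpos.le (htnn n)]
    exact Real.rpow_le_rpow (hsnn n) (hupper n) (by positivity)
end
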